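/- arXiv:2402.15886 — 2 statements merged into one kernel-verified Lean document; each statement's English description precedes it below -/
import Mathlib

section
/- For all positive integers L and integers a, the identity ∑_{k≥0} C_{L,k}(q) · [k choose ⌊(k−a)/2⌋]_q = q^{T(a)} · [2L+1 choose L−a]_q holds, where T(j) = j(j+1)/2 and C_{L,k}(q) = ∑_{m=0}^{L} q^{T(m)+T(m+k)} [L choose m]_q [L−m choose k]_q. -/
open LaurentPolynomial Finset

noncomputable section

/-- The Gaussian binomial coefficient `[m choose n]_q` as a polynomial in `q`,
defined via the `q`-Pascal recurrence; it equals `(q;q)_m/((q;q)_n (q;q)_{m-n})`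
for `0 ≤ n ≤ m`. -/
def gb : ℕ → ℕ → Polynomial ℤ
  | _, 0 => 1
  | 0, _ + 1 => 0
  | m + 1, n + 1 => gb m n + Polynomial.X ^ (n + 1) * gb m (n + 1)

lemma gb_zero (m : ℕ) : gb m 0 = 1 := by cases m <;> rfl

lemma gb_succ (m n : ℕ) : gb (m+1) (n+1) = gb m n + Polynomial.X ^ (n + 1) * gb m (n + 1) := rfl

lemma gb_eq_zero : ∀ {m n : ℕ}, m < n → gb m n = 0 := by
  intro m
  induction m with
  | zero => intro n h; cases n with | zero => omega | succ k => rfl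
  | succ m ih =>
    intro n h
    cases n with
    | zero => omega
    | succ k =>
      rw [gb_succ, ih (by omega), ih (by omega)]
      ring

lemma gb_one_aux (m : ℕ) : gb (m+1) 1 = Polynomial.X ^ m + gb m 1 := by
  induction m with
  | zero => simp [gb_succ, gb_zero, gb_eq_zero (by norm_num : 0 < 1)]
  | succ m ih =>
    have e0 : gb (m+2) 1 = 1 + Polynomial.X * gb (m+1) 1 := by
      rw [gb_succ, gb_zero]; ring
    have e4 : gb (m+1) 1 = 1 + Polynomial.X * gb m 1 := by
      rw [gb_succ, gb_zero]; ring
    rw [e0]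
    nth_rewrite 1 [ih]
    rw [e4]
    ring

/-- Pascal, "form 1": `[m+1 choose n+1] = X^(m-n) [m choose n] + [m choose n+1]`. -/
lemma gb_pascal' (m : ℕ) : ∀ n : ℕ, gb (m+1) (n+1) = Polynomial.X ^ (m - n) * gb m n + gb m (n+1) := by
  induction m with
  | zero =>
    intro n
    cases n with
    | zero => simp [gb_succ, gb_zero, gb_eq_zero (by norm_num : 0 < 1)]
    | succ k =>
      rw [gb_eq_zero (by omega), gb_eq_zero (by omega), gb_eq_zero (by omega)]
      ring
  | succ m ih =>
    intro n
    cases n with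
    | zero =>
      simpa [gb_zero] using gb_one_aux (m+1)
    | succ k =>
      have e1 := gb_succ (m+1) (k+1)
      rw [ih k, ih (k+1)] at e1
      rw [e1, gb_succ m k, gb_succ m (k+1)]
      have h3 : m + 1 - (k + 1) = m - k := by omega
      rw [h3]
      rcases lt_or_ge k m with h | h
      · have h1 : m - k = (m - (k+1)) + 1 := by omega
        rw [h1]
        ring
      · rw [gb_eq_zero (show m < k + 1 by omega)]
        ring

/-- `[m choose n]_q` with integer indices, zero unless `0 ≤ n ≤ m`,
viewed as a Laurent polynomial in `q`. -/
def qbin (m n : ℤ) : LaurentPolynomial ℤ :=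
  if 0 ≤ n ∧ n ≤ m then (gb m.toNat n.toNat).toLaurent else 0

lemma qbin_eq_zero' {m n : ℤ} (h : ¬(0 ≤ n ∧ n ≤ m)) : qbin m n = 0 := if_neg h

lemma qbin_val' (m n : ℕ) : qbin (m:ℤ) (n:ℤ) = (gb m n).toLaurent := by
  by_cases h : n ≤ m
  · have h' : (0:ℤ) ≤ (n:ℤ) ∧ (n:ℤ) ≤ (m:ℤ) := by omega
    rw [qbin, if_pos h']
    simp
  · rw [qbin_eq_zero' (by omega), gb_eq_zero (by omega), map_zero]

lemma qbin_zero (m : ℕ) : qbin (m:ℤ) 0 = 1 := by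
  have := qbin_val' m 0
  rw [gb_zero] at this
  simpa using this

lemma qbin_pascal2 (m : ℕ) (j : ℤ) :
    qbin ((m+1:ℕ):ℤ) j = qbin m (j-1) + T j * qbin m j := by
  rcases lt_trichotomy j 0 with hj | rfl | hj
  · rw [qbin_eq_zero' (by omega), qbin_eq_zero' (by omega), qbin_eq_zero' (by omega)]
    ring
  · rw [qbin_zero (m+1), qbin_zero m, qbin_eq_zero' (by omega), T_zero]
    ring
  · obtain ⟨n, rfl⟩ : ∃ n : ℕ, j = (n:ℤ)+1 := ⟨(j-1).toNat, by omega⟩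
    have h1 : ((n:ℤ)+1) = ((n+1:ℕ):ℤ) := by push_cast; ring
    have h2 : ((n:ℤ)+1) - 1 = ((n:ℕ):ℤ) := by ring
    rw [h2, h1, qbin_val' (m+1) (n+1), qbin_val' m n, qbin_val' m (n+1), gb_succ,
      map_add, map_mul, Polynomial.toLaurent_X_pow]

lemma qbin_pascal1 (m : ℕ) (j : ℤ) :
    qbin ((m+1:ℕ):ℤ) j = T ((m:ℤ)+1-j) * qbin m (j-1) + qbin m j := by
  rcases lt_trichotomy j 0 with hj | rfl | hj
  · rw [qbin_eq_zero' (by omega), qbin_eq_zero' (by omega), qbin_eq_zero' (by omega)]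
    ring
  · rw [qbin_zero (m+1), qbin_zero m, qbin_eq_zero' (by omega)]
    ring
  · obtain ⟨n, rfl⟩ : ∃ n : ℕ, j = (n:ℤ)+1 := ⟨(j-1).toNat, by omega⟩
    have h1 : ((n:ℤ)+1) = ((n+1:ℕ):ℤ) := by push_cast; ring
    have h2 : ((n:ℤ)+1) - 1 = ((n:ℕ):ℤ) := by ring
    rw [h2, h1, qbin_val' (m+1) (n+1), qbin_val' m n, qbin_val' m (n+1), gb_pascal' m n,
      map_add, map_mul, Polynomial.toLaurent_X_pow]
    by_cases h : n ≤ m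
    · have h3 : ((m - n : ℕ) : ℤ) = (m:ℤ) + 1 - ((n+1:ℕ):ℤ) := by push_cast; omega
      rw [h3]
    · rw [gb_eq_zero (by omega : m < n), gb_eq_zero (by omega : m < n + 1)]
      simp

lemma qbin_sub (m : ℕ) (j : ℤ) :
    (1 - T ((m:ℤ)+1-j)) * qbin m (j-1) = (1 - T j) * qbin m j := by
  linear_combination (qbin_pascal1 m j) - (qbin_pascal2 m j)

lemma qbin_cross1 (m : ℕ) (j : ℤ) :
    (1 - T j) * qbin ((m+1:ℕ):ℤ) j = (1 - T ((m:ℤ)+1)) * qbin m (j-1) := by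
  have hT : (T j : LaurentPolynomial ℤ) * T ((m:ℤ)+1-j) = T ((m:ℤ)+1) := by
    rw [← T_add]; congr 1; ring
  linear_combination (1 - T j) * qbin_pascal2 m j - T j * qbin_sub m j
    - qbin m (j-1) * hT

lemma qbin_T_zero (j : ℤ) : T j * qbin 0 j = qbin 0 j := by
  by_cases h : j = 0
  · subst h; rw [T_zero]; ring
  · rw [qbin_eq_zero' (by omega)]; ring

/-- The key kernel identity. -/
lemma BID (k : ℕ) (j : ℤ) :
    qbin ((k+1:ℕ):ℤ) j + (1 - T (k:ℤ)) * qbin ((k:ℤ)-1) (j-1) =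
      qbin (k:ℤ) j + qbin (k:ℤ) (j-1) := by
  cases k with
  | zero =>
    have h0 : ((0:ℕ):ℤ) - 1 = -1 := by norm_num
    rw [h0, qbin_eq_zero' (m := (-1:ℤ)) (by omega), qbin_pascal2 0 j]
    have := qbin_T_zero j
    push_cast at *
    linear_combination this
  | succ m =>
    have h0 : ((m+1:ℕ):ℤ) - 1 = (m:ℤ) := by push_cast; ring
    rw [h0, qbin_pascal2 (m+1) j]
    have hc := qbin_cross1 m j
    have hc2 : ((m:ℤ)+1) = ((m+1:ℕ):ℤ) := by push_cast; ring
    rw [hc2] at hc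
    linear_combination -hc

/-- A Laurent polynomial is a polynomial in `q` with nonnegative coefficients. -/
def IsNonneg (x : LaurentPolynomial ℤ) : Prop :=
  ∃ P : Polynomial ℤ, (∀ n, 0 ≤ P.coeff n) ∧ P.toLaurent = x

/-- The triangular number `T(j) = j(j+1)/2`. -/
def tri (j : ℤ) : ℤ := j * (j + 1) / 2

lemma tri_succ (x : ℤ) : tri (x+1) = tri x + (x + 1) := by
  unfold tri
  obtain ⟨t, ht⟩ := Int.even_mul_succ_self x
  have h1 : x * (x+1) = 2 * t := by omega
  have h2 : (x+1) * (x+1+1) = 2 * (t + x + 1) := by nlinarith [h1]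
  rw [h1, h2, Int.mul_ediv_cancel_left _ (by norm_num : (2:ℤ) ≠ 0),
    Int.mul_ediv_cancel_left _ (by norm_num : (2:ℤ) ≠ 0)]
  ring

/-- `C_{L,k}(q) = ∑_{m=0}^{L} q^{T(m)+T(m+k)} [L choose m]_q [L-m choose k]_q`. -/
def Cpoly (L k : ℕ) : LaurentPolynomial ℤ :=
  ∑ m ∈ Finset.range (L + 1),
    T (tri m + tri (m + k)) * (gb L m).toLaurent * (gb (L - m) k).toLaurent

def Ppoly (L k : ℕ) : LaurentPolynomial ℤ :=
  ∑ m ∈ Finset.range (L + 1),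
    T (tri m + tri (m + k) + m) * (gb L m).toLaurent * (gb (L - m) k).toLaurent

def Dpoly (L k : ℕ) : LaurentPolynomial ℤ :=
  ∑ m ∈ Finset.range (L + 1),
    T (tri m + tri (m + k)) * (gb L m).toLaurent * (gb (L + 1 - m) k).toLaurent

lemma Cpoly_eq_zero {L k : ℕ} (h : L < k) : Cpoly L k = 0 := by
  apply Finset.sum_eq_zero
  intro m hm
  rw [gb_eq_zero (show L - m < k by omega), map_zero, mul_zero]

lemma D1 (L k : ℕ) :
    Dpoly L (k+1) = T ((k:ℤ)+1) * Cpoly L (k+1) + T ((k:ℤ)+1) * Ppoly L k := by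
  unfold Dpoly Cpoly Ppoly
  rw [Finset.mul_sum, Finset.mul_sum, ← Finset.sum_add_distrib]
  refine Finset.sum_congr rfl fun m hm => ?_
  have hm' : m ≤ L := by have := Finset.mem_range.mp hm; omega
  have hrw : L + 1 - m = (L - m) + 1 := by omega
  have e : (gb (L + 1 - m) (k+1)).toLaurent
      = (gb (L-m) k).toLaurent + T ((k:ℤ)+1) * (gb (L-m) (k+1)).toLaurent := by
    rw [hrw, gb_succ, map_add, map_mul, Polynomial.toLaurent_X_pow]
    push_cast
    ring
  have hA : (T (tri m + tri (m + ((k:ℕ)+1))) : LaurentPolynomial ℤ)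
      = T ((k:ℤ)+1) * T (tri m + tri (m + (k:ℕ)) + m) := by
    rw [← T_add]
    congr 1
    have h1 : ((m:ℤ) + ((k:ℕ)+1:ℕ)) = ((m:ℤ) + k) + 1 := by push_cast; ring
    have h2 := tri_succ ((m:ℤ) + k)
    push_cast at *
    rw [h1]
    linarith [h2]
  rw [e]
  push_cast at *
  rw [hA]
  ring

lemma D2 (L k : ℕ) :
    Dpoly L (k+1) = Cpoly L (k+1) + T ((L:ℤ)+1) * Cpoly L k := by
  unfold Dpoly Cpoly
  rw [Finset.mul_sum, ← Finset.sum_add_distrib]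
  refine Finset.sum_congr rfl fun m hm => ?_
  have hm' : m ≤ L := by have := Finset.mem_range.mp hm; omega
  have hrw : L + 1 - m = (L - m) + 1 := by omega
  have e : (gb (L + 1 - m) (k+1)).toLaurent
      = T (((L-m-k : ℕ)):ℤ) * (gb (L-m) k).toLaurent + (gb (L-m) (k+1)).toLaurent := by
    rw [hrw, gb_pascal', map_add, map_mul, Polynomial.toLaurent_X_pow]
  rw [e]
  by_cases hk : k ≤ L - m
  · have hB : (T (tri m + tri (m + ((k:ℕ)+1))) : LaurentPolynomial ℤ) * T (((L-m-k : ℕ)):ℤ)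
        = T ((L:ℤ)+1) * T (tri m + tri (m + (k:ℕ))) := by
      rw [← T_add, ← T_add]
      congr 1
      have h1 : ((m:ℤ) + ((k:ℕ)+1:ℕ)) = ((m:ℤ) + k) + 1 := by push_cast; ring
      have h2 := tri_succ ((m:ℤ) + k)
      have h3 : (((L-m-k : ℕ)):ℤ) = (L:ℤ) - m - k := by omega
      push_cast at *
      rw [h1, h3]
      linarith [h2]
    push_cast at *
    linear_combination ((gb L m).toLaurent * (gb (L-m) k).toLaurent) * hB
  · rw [gb_eq_zero (show L - m < k by omega), map_zero]
    ring

lemma D3 (L k : ℕ) :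
    Cpoly (L+1) k = Dpoly L k + T ((L:ℤ) + k + 2) * Ppoly L k := by
  have hD : Dpoly L k = (∑ m ∈ Finset.range (L + 1 + 1),
      T (tri m + tri (m + k)) * (gb L m).toLaurent * (gb (L + 1 - m) k).toLaurent) := by
    rw [Finset.sum_range_succ, gb_eq_zero (show L < L + 1 by omega), map_zero, mul_zero,
      zero_mul, add_zero]
    rfl
  unfold Cpoly Ppoly
  rw [hD, Finset.sum_range_succ' _ (L+1), Finset.sum_range_succ' _ (L+1),
    Finset.mul_sum, add_right_comm, ← Finset.sum_add_distrib]
  have h0 : (T (tri (0:ℕ) + tri ((0:ℕ) + k)) : LaurentPolynomial ℤ)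
        * (gb (L+1) 0).toLaurent * (gb (L + 1 - 0) k).toLaurent
      = T (tri (0:ℕ) + tri ((0:ℕ) + k)) * (gb L 0).toLaurent * (gb (L + 1 - 0) k).toLaurent := by
    rw [gb_zero, gb_zero]
  rw [h0]
  congr 1
  refine Finset.sum_congr rfl fun m hm => ?_
  have hm' : m ≤ L := by have := Finset.mem_range.mp hm; omega
  have hrw : L + 1 - (m+1) = L - m := by omega
  have e : (gb (L+1) (m+1)).toLaurent
      = T (((L-m : ℕ)):ℤ) * (gb L m).toLaurent + (gb L (m+1)).toLaurent := by
    rw [gb_pascal', map_add, map_mul, Polynomial.toLaurent_X_pow]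
  rw [hrw, e]
  have hB : (T (tri ((m:ℕ)+1) + tri (((m:ℕ)+1) + k)) : LaurentPolynomial ℤ) * T (((L-m : ℕ)):ℤ)
      = T ((L:ℤ) + k + 2) * T (tri m + tri (m + (k:ℕ)) + m) := by
    rw [← T_add, ← T_add]
    congr 1
    have h2 := tri_succ (m:ℤ)
    have h3 := tri_succ ((m:ℤ) + k)
    have h4 : (((L-m : ℕ)):ℤ) = (L:ℤ) - m := by omega
    have h5 : (m:ℤ) + 1 + k = ((m:ℤ) + k) + 1 := by ring
    push_cast at *
    rw [h4, h5]
    linarith [h2, h3]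
  push_cast at *
  linear_combination ((gb L m).toLaurent * (gb (L-m) k).toLaurent) * hB

lemma Prec (L k : ℕ) :
    T ((k:ℤ)+1) * Ppoly L k
      = (1 - T ((k:ℤ)+1)) * Cpoly L (k+1) + T ((L:ℤ)+1) * Cpoly L k := by
  linear_combination (D2 L k) - (D1 L k)

lemma Crec (L k : ℕ) :
    Cpoly (L+1) (k+1) = (1 + T (2*(L:ℤ)+2)) * Cpoly L (k+1) + T ((L:ℤ)+1) * Cpoly L k
      + T ((L:ℤ)+1) * (1 - T ((k:ℤ)+2)) * Cpoly L (k+2) := by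
  have h3 := D3 L (k+1)
  have h2 := D2 L k
  have hp := Prec L (k+1)
  have hT1 : (T ((L:ℤ) + ((k:ℕ)+1:ℕ) + 2) : LaurentPolynomial ℤ) = T ((L:ℤ)+1) * T (((k:ℕ):ℤ)+1+1) := by
    rw [← T_add]; try congr 1; try push_cast; try ring
  have hT2 : (T ((L:ℤ)+1) : LaurentPolynomial ℤ) * T ((L:ℤ)+1) = T (2*(L:ℤ)+2) := by
    rw [← T_add]; congr 1; ring
  push_cast at *
  have hkk : ((k:ℤ)+1+1) = (k:ℤ)+2 := by ring
  rw [hkk] at hp hT1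
  linear_combination h3 + h2 + T ((L:ℤ)+1) * hp + (Ppoly L (k+1)) * hT1
    + (Cpoly L (k+1)) * hT2

lemma Crec0 (L : ℕ) :
    Cpoly (L+1) 0 = (1 + T (2*(L:ℤ)+2)) * Cpoly L 0
      + T ((L:ℤ)+1) * (1 - T (1:ℤ)) * Cpoly L 1 := by
  have h3 := D3 L 0
  have hp := Prec L 0
  have hD0 : Dpoly L 0 = Cpoly L 0 := by
    unfold Dpoly Cpoly
    exact Finset.sum_congr rfl fun m hm => by rw [gb_zero, gb_zero]
  have hT1 : (T ((L:ℤ) + ((0:ℕ):ℤ) + 2) : LaurentPolynomial ℤ) = T ((L:ℤ)+1) * T (((0:ℕ):ℤ)+1) := by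
    rw [← T_add]; try congr 1; try push_cast; try ring
  have hT2 : (T ((L:ℤ)+1) : LaurentPolynomial ℤ) * T ((L:ℤ)+1) = T (2*(L:ℤ)+2) := by
    rw [← T_add]; congr 1; ring
  push_cast at *
  linear_combination h3 + hD0 + T ((L:ℤ)+1) * hp + (Ppoly L 0) * hT1 + (Cpoly L 0) * hT2

def Bq (k : ℕ) (a : ℤ) : LaurentPolynomial ℤ := qbin (k:ℤ) (((k:ℤ) - a).fdiv 2)

def Sfin (L : ℕ) (a : ℤ) : LaurentPolynomial ℤ :=
  ∑ k ∈ Finset.range (L+1), Cpoly L k * Bq k a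

lemma hfd (x : ℤ) : (x-2).fdiv 2 = x.fdiv 2 - 1 := by
  rw [Int.fdiv_eq_ediv_of_nonneg _ (by norm_num), Int.fdiv_eq_ediv_of_nonneg _ (by norm_num)]
  omega

lemma BqID (k : ℕ) (a : ℤ) :
    Bq (k+1) a + (1 - T (k:ℤ)) * qbin ((k:ℤ)-1) ((((k:ℤ)-1) - a).fdiv 2)
      = Bq k (a-1) + Bq k (a+1) := by
  unfold Bq
  have c1 : ((k+1:ℕ):ℤ) - a = (k:ℤ)+1-a := by push_cast; ring
  have c2 : (k:ℤ)-1-a = ((k:ℤ)+1-a) - 2 := by ring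
  have c3 : (k:ℤ)-(a-1) = (k:ℤ)+1-a := by ring
  have c4 : (k:ℤ)-(a+1) = ((k:ℤ)+1-a) - 2 := by ring
  rw [c1, c2, c3, c4, hfd]
  exact BID k (((k:ℤ)+1-a).fdiv 2)

lemma Sstep (L : ℕ) (a : ℤ) :
    Sfin (L+1) a = (1 + T (2*(L:ℤ)+2)) * Sfin L a
      + T ((L:ℤ)+1) * (Sfin L (a-1) + Sfin L (a+1)) := by
  have h1 : Sfin (L+1) a
      = ∑ k ∈ Finset.range (L+1), Cpoly (L+1) (k+1) * Bq (k+1) a + Cpoly (L+1) 0 * Bq 0 a := by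
    unfold Sfin
    exact Finset.sum_range_succ' _ (L+1)
  have h2 : ∑ k ∈ Finset.range (L+1), Cpoly (L+1) (k+1) * Bq (k+1) a
      = (1 + T (2*(L:ℤ)+2)) * (∑ k ∈ Finset.range (L+1), Cpoly L (k+1) * Bq (k+1) a)
        + T ((L:ℤ)+1) * (∑ k ∈ Finset.range (L+1), Cpoly L k * Bq (k+1) a)
        + T ((L:ℤ)+1) * (∑ k ∈ Finset.range (L+1),
            (1 - T ((k:ℤ)+2)) * Cpoly L (k+2) * Bq (k+1) a) := by
    rw [Finset.mul_sum, Finset.mul_sum, Finset.mul_sum, ← Finset.sum_add_distrib,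
      ← Finset.sum_add_distrib]
    refine Finset.sum_congr rfl fun k hk => ?_
    rw [Crec L k]
    ring
  have h3 : ∑ k ∈ Finset.range (L+1), Cpoly L (k+1) * Bq (k+1) a + Cpoly L 0 * Bq 0 a
      = Sfin L a := by
    have e := Finset.sum_range_succ (fun k => Cpoly L k * Bq k a) (L+1)
    rw [Cpoly_eq_zero (show L < L+1 by omega), zero_mul, add_zero] at e
    rw [← Finset.sum_range_succ' (fun k => Cpoly L k * Bq k a) (L+1), e]
    rfl
  have h4 : ∑ k ∈ Finset.range (L+1), (1 - T ((k:ℤ)+2)) * Cpoly L (k+2) * Bq (k+1) a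
        + (1 - T (1:ℤ)) * Cpoly L 1 * Bq 0 a
      = ∑ k ∈ Finset.range (L+1),
          (1 - T (k:ℤ)) * Cpoly L k * qbin ((k:ℤ)-1) ((((k:ℤ)-1) - a).fdiv 2) := by
    have e1 : ∑ k ∈ Finset.range (L+1), (1 - T ((k:ℤ)+2)) * Cpoly L (k+2) * Bq (k+1) a
          + (1 - T (1:ℤ)) * Cpoly L 1 * Bq 0 a
        = ∑ k ∈ Finset.range (L+1+1), (1 - T ((k:ℤ)+1)) * Cpoly L (k+1) * Bq k a := by
      rw [Finset.sum_range_succ' (fun k => (1 - T ((k:ℤ)+1)) * Cpoly L (k+1) * Bq k a) (L+1)]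
      congr 1
    have e2 : ∑ k ∈ Finset.range (L+1+1), (1 - T ((k:ℤ)+1)) * Cpoly L (k+1) * Bq k a
        = ∑ k ∈ Finset.range (L+1), (1 - T ((k:ℤ)+1)) * Cpoly L (k+1) * Bq k a := by
      rw [Finset.sum_range_succ, Cpoly_eq_zero (show L < L+1+1 by omega), mul_zero, zero_mul,
        add_zero]
    have e3 : ∑ k ∈ Finset.range (L+1), (1 - T ((k:ℤ)+1)) * Cpoly L (k+1) * Bq k a
        = ∑ k ∈ Finset.range L, (1 - T ((k:ℤ)+1)) * Cpoly L (k+1) * Bq k a := by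
      rw [Finset.sum_range_succ, Cpoly_eq_zero (show L < L+1 by omega), mul_zero, zero_mul,
        add_zero]
    have e4 : ∑ k ∈ Finset.range (L+1),
          (1 - T (k:ℤ)) * Cpoly L k * qbin ((k:ℤ)-1) ((((k:ℤ)-1) - a).fdiv 2)
        = ∑ k ∈ Finset.range L, (1 - T ((k:ℤ)+1)) * Cpoly L (k+1) * Bq k a := by
      rw [Finset.sum_range_succ' (fun k =>
        (1 - T (k:ℤ)) * Cpoly L k * qbin ((k:ℤ)-1) ((((k:ℤ)-1) - a).fdiv 2)) L]
      have hz : (1 - T ((0:ℕ):ℤ)) * Cpoly L 0 * qbin (((0:ℕ):ℤ)-1) ((((0:ℕ):ℤ)-1 - a).fdiv 2)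
          = 0 := by
        have : ((0:ℕ):ℤ) = 0 := by norm_num
        rw [this, T_zero, sub_self, zero_mul, zero_mul]
      rw [hz, add_zero]
      refine Finset.sum_congr rfl fun k hk => ?_
      have c5 : ((k+1:ℕ):ℤ) = (k:ℤ)+1 := by push_cast; ring
      have c6 : ((k+1:ℕ):ℤ) - 1 = (k:ℤ) := by push_cast; ring
      rw [c6, c5]
      rfl
    rw [e1, e2, e3, e4]
  have h5 : ∑ k ∈ Finset.range (L+1), Cpoly L k * Bq (k+1) a
        + ∑ k ∈ Finset.range (L+1),
            (1 - T (k:ℤ)) * Cpoly L k * qbin ((k:ℤ)-1) ((((k:ℤ)-1) - a).fdiv 2)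
      = Sfin L (a-1) + Sfin L (a+1) := by
    unfold Sfin
    rw [← Finset.sum_add_distrib, ← Finset.sum_add_distrib]
    refine Finset.sum_congr rfl fun k hk => ?_
    linear_combination (Cpoly L k) * BqID k a
  have hC0 := Crec0 L
  linear_combination h1 + h2 + (1 + T (2*(L:ℤ)+2)) * h3 + T ((L:ℤ)+1) * h4
    + T ((L:ℤ)+1) * h5 + Bq 0 a * hC0

lemma Rstep (L : ℕ) (a : ℤ) :
    T (tri a) * qbin ((2*L+3:ℕ):ℤ) (((L:ℤ)+1) - a)
      = (1 + T (2*(L:ℤ)+2)) * (T (tri a) * qbin ((2*L+1:ℕ):ℤ) ((L:ℤ)-a))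
        + T ((L:ℤ)+1) * (T (tri (a-1)) * qbin ((2*L+1:ℕ):ℤ) ((L:ℤ)-(a-1))
          + T (tri (a+1)) * qbin ((2*L+1:ℕ):ℤ) ((L:ℤ)-(a+1))) := by
  have q1 := qbin_pascal2 (2*L+2) ((L:ℤ)+1-a)
  have q2 := qbin_pascal1 (2*L+1) (((L:ℤ)+1-a)-1)
  have q3 := qbin_pascal1 (2*L+1) ((L:ℤ)+1-a)
  have c1 : (2*L+2+1:ℕ) = (2*L+3:ℕ) := by ring
  have c2 : (2*L+1+1:ℕ) = (2*L+2:ℕ) := by ring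
  rw [c1] at q1
  rw [c2] at q2 q3
  have i1 : (L:ℤ) - a = ((L:ℤ)+1-a) - 1 := by ring
  have i2 : (L:ℤ) - (a-1) = (L:ℤ)+1-a := by ring
  have i3 : (L:ℤ) - (a+1) = ((L:ℤ)+1-a) - 1 - 1 := by ring
  rw [i1, i2, i3]
  have hA : (T (tri a) : LaurentPolynomial ℤ) * T (((2*L+1:ℕ):ℤ)+1-(((L:ℤ)+1-a)-1))
      = T ((L:ℤ)+1) * T (tri (a+1)) := by
    rw [← T_add, ← T_add]
    congr 1
    have h2 := tri_succ a
    push_cast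
    linarith [h2]
  have hB : (T ((L:ℤ)+1-a) : LaurentPolynomial ℤ) * T (((2*L+1:ℕ):ℤ)+1-((L:ℤ)+1-a))
      = T (2*(L:ℤ)+2) := by
    rw [← T_add]
    congr 1
    push_cast
    ring
  have hC : (T (tri a) : LaurentPolynomial ℤ) * T ((L:ℤ)+1-a)
      = T ((L:ℤ)+1) * T (tri (a-1)) := by
    rw [← T_add, ← T_add]
    congr 1
    have h2 := tri_succ (a-1)
    have h3 : a - 1 + 1 = a := by ring
    rw [h3] at h2
    linarith [h2]
  linear_combination T (tri a) * q1 + T (tri a) * q2 + T (tri a) * T ((L:ℤ)+1-a) * q3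
    + qbin ((2*L+1:ℕ):ℤ) (((L:ℤ)+1-a)-1-1) * hA
    + qbin ((2*L+1:ℕ):ℤ) (((L:ℤ)+1-a)-1) * T (tri a) * hB
    + qbin ((2*L+1:ℕ):ℤ) ((L:ℤ)+1-a) * hC

lemma qbin_one_one : qbin ((1:ℕ):ℤ) ((1:ℕ):ℤ) = 1 := by
  rw [qbin_val' 1 1, gb_succ, gb_zero, gb_eq_zero (show 0 < 1 by omega)]
  simp

lemma Sbase (a : ℤ) : Sfin 0 a = T (tri a) * qbin ((2*0+1:ℕ):ℤ) ((0:ℤ) - a) := by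
  have hC : Cpoly 0 0 = 1 := by
    unfold Cpoly
    rw [Finset.sum_range_one]
    norm_num [tri, gb_zero]
  have hS : Sfin 0 a = Bq 0 a := by
    unfold Sfin
    rw [Finset.sum_range_one, hC, one_mul]
  rw [hS]
  unfold Bq
  have c0 : ((0:ℕ):ℤ) - a = -a := by push_cast; ring
  have c1 : (0:ℤ) - a = -a := by ring
  have c2 : ((2*0+1:ℕ):ℤ) = ((1:ℕ):ℤ) := by norm_num
  rw [c0, c1, c2]
  by_cases h0 : a = 0
  · subst h0
    have : ((-0:ℤ)).fdiv 2 = 0 := by decide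
    rw [this]
    have t0 : tri 0 = 0 := by norm_num [tri]
    have e1 : qbin ((0:ℕ):ℤ) 0 = 1 := qbin_zero 0
    have e2 : qbin ((1:ℕ):ℤ) (-0) = 1 := by
      rw [show (-0:ℤ) = ((0:ℕ):ℤ) by norm_num, qbin_val' 1 0, gb_zero]
      simp
    push_cast at *
    rw [e1, e2, t0, T_zero]
    ring
  · by_cases h1 : a = -1
    · subst h1
      have : ((-(-1):ℤ)).fdiv 2 = 0 := by decide
      rw [this]
      have t0 : tri (-1) = 0 := by norm_num [tri]
      have e1 : qbin ((0:ℕ):ℤ) 0 = 1 := qbin_zero 0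
      have e2 : qbin ((1:ℕ):ℤ) (-(-1)) = 1 := by
        rw [show (-(-1):ℤ) = ((1:ℕ):ℤ) by norm_num]
        exact qbin_one_one
      push_cast at *
      rw [e1, e2, t0, T_zero]
      ring
    · have e1 : qbin ((0:ℕ):ℤ) ((-a).fdiv 2) = 0 := by
        apply qbin_eq_zero'
        rw [Int.fdiv_eq_ediv_of_nonneg _ (by norm_num)]
        push_cast
        omega
      have e2 : qbin ((1:ℕ):ℤ) (-a) = 0 := by
        apply qbin_eq_zero'
        push_cast
        omega
      rw [e1, e2]
      ring

lemma main_ident (L : ℕ) : ∀ a : ℤ, Sfin L a = T (tri a) * qbin ((2*L+1:ℕ):ℤ) ((L:ℤ) - a) := by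
  induction L with
  | zero => exact Sbase
  | succ L ih =>
    intro a
    rw [Sstep L a, ih a, ih (a-1), ih (a+1)]
    have hR := Rstep L a
    have c1 : (2*(L+1)+1:ℕ) = (2*L+3:ℕ) := by ring
    have c2 : ((L+1:ℕ):ℤ) = (L:ℤ)+1 := by push_cast; ring
    rw [c1, c2]
    linear_combination -hR

/-- Berkovich's transformation:
`∑_{k ≥ 0} C_{L,k}(q) [k choose ⌊(k-a)/2⌋]_q = q^{T(a)} [2L+1 choose L-a]_q`. -/
theorem berkovich_transformation (L : ℕ) (hL : 0 < L) (a : ℤ) :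
    ∑ᶠ k : ℕ, Cpoly L k * qbin k (Int.fdiv ((k : ℤ) - a) 2) =
      T (tri a) * qbin (2 * L + 1) ((L : ℤ) - a) := by
  have hsub : (Function.support fun k : ℕ => Cpoly L k * qbin k (Int.fdiv ((k:ℤ) - a) 2))
      ⊆ ↑(Finset.range (L+1)) := by
    intro k hk
    simp only [Function.mem_support] at hk
    simp only [Finset.coe_range, Set.mem_Iio]
    by_contra h
    exact hk (by rw [Cpoly_eq_zero (show L < k by omega), zero_mul])
  rw [finsum_eq_finset_sum_of_support_subset _ hsub]
  have h1 : ∑ k ∈ Finset.range (L+1), Cpoly L k * qbin k (((k:ℤ) - a).fdiv 2) = Sfin L a := rfl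
  have h2 : ((2*L+1:ℕ):ℤ) = 2*(L:ℤ)+1 := by push_cast; ring
  rw [h1, main_ident L a, h2]
end
end

section
/- Let K, i be positive integers with 0 < i < K and let N, M, α, β be nonnegative integers with 1 ≤ α+β ≤ K−1 and β−i ≤ N−M ≤ K−α−i. Then the polynomial D_{K,i}(N,M;α,β) = ∑_{j∈ℤ} ( q^{j((α+β)Kj + Kβ − (α+β)i)} [M+N choose M−Kj]_q − q^{((α+β)j+β)(Kj+i)} [M+N choose M−Kj−i]_q ) has nonnegative coefficients. -/
open LaurentPolynomial Finset

noncomputable section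

/-- The hook-difference generating function `D_{K,i}(N,M;α,β)` of Andrews et al.,
parametrized by the integers `aK = αK`, `bK = βK`, `ai = αi`, `bi = βi`
(so that rational `α, β` with these products integral are allowed):
`D = ∑_{j ∈ ℤ} ( q^{j((α+β)Kj + Kβ - (α+β)i)} [M+N choose M-Kj]_q
               - q^{((α+β)j+β)(Kj+i)} [M+N choose M-Kj-i]_q )`. -/
def D (K i N M aK bK ai bi : ℤ) : LaurentPolynomial ℤ :=
  ∑ᶠ j : ℤ,
    (T (j * ((aK + bK) * j + bK - (ai + bi))) * qbin (M + N) (M - K * j) -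
      T ((aK + bK) * j ^ 2 + (bK + ai + bi) * j + bi) * qbin (M + N) (M - K * j - i))

namespace HookDiff

open Polynomial

lemma gb_zero (m : ℕ) : gb m 0 = 1 := by cases m <;> rfl

lemma gb_succ (m n : ℕ) : gb (m+1) (n+1) = gb m n + X ^ (n + 1) * gb m (n + 1) := rfl

lemma gb_of_lt : ∀ {m n : ℕ}, m < n → gb m n = 0 := by
  intro m
  induction m with
  | zero => intro n h; obtain ⟨k, rfl⟩ : ∃ k, n = k + 1 := ⟨n - 1, by omega⟩; rfl
  | succ m ih =>
    intro n h
    obtain ⟨k, rfl⟩ : ∃ k, n = k + 1 := ⟨n - 1, by omega⟩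
    rw [gb_succ, ih (by omega), ih (by omega), mul_zero, add_zero]

lemma gb_self : ∀ m : ℕ, gb m m = 1 := by
  intro m
  induction m with
  | zero => rfl
  | succ m ih => rw [gb_succ, ih, gb_of_lt (by omega), mul_zero, add_zero]

lemma gb_pascalB : ∀ m n : ℕ, gb (m+1) (n+1) = X ^ (m - n) * gb m n + gb m (n+1) := by
  intro m
  induction m with
  | zero =>
    intro n
    cases n with
    | zero => simp [gb_succ, gb_zero, gb_of_lt]
    | succ k => simp [gb_succ, gb_of_lt]
  | succ m ih =>
    intro n
    cases n with
    | zero =>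
      conv_lhs => rw [gb_succ, ih 0]
      conv_rhs => rw [gb_succ]
      simp only [Nat.sub_zero, gb_zero]
      rw [pow_succ]
      ring
    | succ k =>
      conv_lhs => rw [gb_succ, ih k, ih (k+1)]
      conv_rhs => rw [gb_succ, gb_succ]
      rcases lt_or_ge k m with h | h
      · obtain ⟨t, rfl⟩ : ∃ t, m = k + 1 + t := ⟨m - (k+1), by omega⟩
        rw [show k+1+t - k = t+1 from by omega, show k+1+t - (k+1) = t from by omega,
          show k+1+t+1 - (k+1) = t+1 from by omega, pow_succ, pow_add, pow_add]
        ring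
      · rw [gb_of_lt (show m < k + 1 by omega), gb_of_lt (show m < k + 1 + 1 by omega),
          show m - k = 0 from by omega, show m - (k+1) = 0 from by omega,
          show m + 1 - (k+1) = 0 from by omega]
        ring

lemma gb_symm : ∀ m n : ℕ, n ≤ m → gb m n = gb m (m - n) := by
  intro m
  induction m with
  | zero => intro n h; rw [show n = 0 from by omega]
  | succ m ih =>
    intro n h
    cases n with
    | zero => rw [gb_zero, Nat.sub_zero, gb_self]
    | succ k =>
      rcases eq_or_lt_of_le h with h' | h'
      · rw [← h']; simp [gb_zero, gb_self]
      · obtain ⟨t, rfl⟩ : ∃ t, m = k + 1 + t := ⟨m - (k+1), by omega⟩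
        conv_lhs => rw [gb_succ, ih k (by omega), ih (k+1) (by omega)]
        conv_rhs => rw [show k+1+t+1 - (k+1) = t+1 from by omega, gb_pascalB]
        rw [show k+1+t - k = t+1 from by omega, show k+1+t - (k+1) = t from by omega,
          show k+1+t - t = k+1 from by omega]
        ring

lemma gb_coeff_nonneg : ∀ m n k : ℕ, 0 ≤ (gb m n).coeff k := by
  intro m
  induction m with
  | zero =>
    intro n k
    cases n with
    | zero => rw [gb_zero]; rw [Polynomial.coeff_one]; positivity
    | succ n => show (0:Polynomial ℤ).coeff k ≥ 0; simp
  | succ m ih =>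
    intro n k
    cases n with
    | zero => rw [gb_zero, Polynomial.coeff_one]; positivity
    | succ n =>
      rw [gb_succ, Polynomial.coeff_add, mul_comm, Polynomial.coeff_mul_X_pow']
      have := ih n k
      have h2 : 0 ≤ (gb m (n+1)).coeff (k - (n+1)) := ih (n+1) _
      positivity


lemma qbin_of_neg {m n : ℤ} (h : n < 0) : qbin m n = 0 := if_neg (by omega)

lemma qbin_of_gt {m n : ℤ} (h : m < n) : qbin m n = 0 := if_neg (by omega)

lemma qbin_eq {m n : ℤ} (hm : 0 ≤ m) (hn : 0 ≤ n) :
    qbin m n = (gb m.toNat n.toNat).toLaurent := by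
  rcases le_or_gt n m with h | h
  · exact if_pos ⟨hn, h⟩
  · rw [qbin_of_gt h, gb_of_lt (show m.toNat < n.toNat by omega), map_zero]

lemma qbin_zero {m : ℤ} (hm : 0 ≤ m) : qbin m 0 = 1 := by
  rw [qbin_eq hm le_rfl, Int.toNat_zero, gb_zero, map_one]

lemma qbin_self {m : ℤ} (hm : 0 ≤ m) : qbin m m = 1 := by
  rw [qbin_eq hm hm, gb_self, map_one]

lemma qbin_ne_zero {m n : ℤ} (h : qbin m n ≠ 0) : 0 ≤ n ∧ n ≤ m := by
  by_contra hc
  exact h (if_neg hc)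

lemma qbin_pascalA (m n : ℤ) (hm : 0 ≤ m) :
    qbin (m+1) n = qbin m (n-1) + T n * qbin m n := by
  rcases lt_trichotomy n 0 with h | h | h
  · rw [qbin_of_neg h, qbin_of_neg (by omega), qbin_of_neg h, mul_zero, add_zero]
  · subst h
    rw [qbin_zero (by omega), qbin_of_neg (by omega), qbin_zero hm, T_zero, mul_one, zero_add]
  · rw [qbin_eq (by omega) (by omega), qbin_eq hm (by omega), qbin_eq hm (by omega)]
    have h1 : (m+1).toNat = m.toNat + 1 := by omega
    have h2 : n.toNat = (n-1).toNat + 1 := by omega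
    rw [h1, h2, gb_succ, map_add, map_mul, Polynomial.toLaurent_X_pow,
      show (((n-1).toNat + 1 : ℕ) : ℤ) = n from by omega]

lemma qbin_pascalB (m n : ℤ) (hm : 0 ≤ m) :
    qbin (m+1) n = T (m+1-n) * qbin m (n-1) + qbin m n := by
  rcases lt_trichotomy n 0 with h | h | h
  · rw [qbin_of_neg h, qbin_of_neg (by omega), qbin_of_neg h, mul_zero, add_zero]
  · subst h
    rw [qbin_zero (by omega), qbin_of_neg (by omega), qbin_zero hm, mul_zero, zero_add]
  · rcases le_or_gt n (m+1) with h2 | h2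
    · rw [qbin_eq (by omega) (by omega), qbin_eq hm (by omega), qbin_eq hm (by omega)]
      have e1 : (m+1).toNat = m.toNat + 1 := by omega
      have e2 : n.toNat = (n-1).toNat + 1 := by omega
      rw [e1, e2, gb_pascalB, map_add, map_mul, Polynomial.toLaurent_X_pow,
        show ((m.toNat - (n-1).toNat : ℕ) : ℤ) = m + 1 - n from by omega]
    · rw [qbin_of_gt h2, qbin_of_gt (by omega), qbin_of_gt (by omega), mul_zero, add_zero]

lemma qbin_symm {m : ℤ} (hm : 0 ≤ m) (n : ℤ) : qbin m n = qbin m (m - n) := by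
  rcases lt_trichotomy n 0 with h | h | h
  · rw [qbin_of_neg h, qbin_of_gt (by omega)]
  · subst h; rw [qbin_zero hm, sub_zero, qbin_self hm]
  · rcases le_or_gt n m with h2 | h2
    · rw [qbin_eq hm (by omega), qbin_eq hm (by omega),
        gb_symm m.toNat n.toNat (by omega), show (m-n).toNat = m.toNat - n.toNat from by omega]
    · rw [qbin_of_gt h2, qbin_of_neg (by omega)]


lemma isNonneg_zero : IsNonneg 0 := ⟨0, by simp⟩

lemma isNonneg_one : IsNonneg 1 := ⟨1, fun n => by rw [Polynomial.coeff_one]; positivity, map_one _⟩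

lemma isNonneg_add {x y : LaurentPolynomial ℤ} (hx : IsNonneg x) (hy : IsNonneg y) :
    IsNonneg (x + y) := by
  obtain ⟨P, hP, hPx⟩ := hx
  obtain ⟨Q, hQ, hQy⟩ := hy
  exact ⟨P + Q, fun n => by rw [Polynomial.coeff_add]; exact add_nonneg (hP n) (hQ n),
    by rw [map_add, hPx, hQy]⟩

lemma isNonneg_T_mul {x : LaurentPolynomial ℤ} {n : ℤ} (hn : 0 ≤ n) (hx : IsNonneg x) :
    IsNonneg (T n * x) := by
  obtain ⟨P, hP, hPx⟩ := hx
  refine ⟨X ^ n.toNat * P, fun k => ?_, ?_⟩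
  · rw [mul_comm, Polynomial.coeff_mul_X_pow']
    split <;> simp [hP]
  · rw [map_mul, Polynomial.toLaurent_X_pow, hPx, show ((n.toNat : ℕ) : ℤ) = n from by omega]

def trm1 (K i N M aK bK ai bi j : ℤ) : LaurentPolynomial ℤ :=
  T (j * ((aK + bK) * j + bK - (ai + bi))) * qbin (M + N) (M - K * j)

def trm2 (K i N M aK bK ai bi j : ℤ) : LaurentPolynomial ℤ :=
  T ((aK + bK) * j ^ 2 + (bK + ai + bi) * j + bi) * qbin (M + N) (M - K * j - i)

lemma D_eq (K i N M aK bK ai bi : ℤ) :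
    D K i N M aK bK ai bi
      = ∑ᶠ j : ℤ, (trm1 K i N M aK bK ai bi j - trm2 K i N M aK bK ai bi j) := rfl

lemma support_aux {K : ℤ} (hK : 0 < K) (e : ℤ → ℤ) (m c : ℤ) :
    (Function.support (fun j : ℤ => T (e j) * qbin m (c - K * j))).Finite := by
  apply Set.Finite.subset (Set.finite_Icc (-(|m| + |c|)) (|m| + |c|))
  intro j hj
  have hq : qbin m (c - K * j) ≠ 0 := by
    intro h0
    exact hj (by simp [h0])
  obtain ⟨h1, h2⟩ := qbin_ne_zero hq
  have hb : |K * j| ≤ |m| + |c| := by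
    rw [abs_le]
    constructor <;> [nlinarith [abs_nonneg m, abs_nonneg c, le_abs_self m, le_abs_self c,
        neg_abs_le m, neg_abs_le c]; nlinarith [le_abs_self m, le_abs_self c, abs_nonneg m]]
  have hj' : |j| ≤ |K * j| := by
    rw [abs_mul]
    nlinarith [abs_nonneg j, abs_nonneg K, le_abs_self K]
  rw [Set.mem_Icc, ← abs_le]
  omega

lemma trm1_support {K i N M aK bK ai bi : ℤ} (hK : 0 < K) :
    (Function.support (trm1 K i N M aK bK ai bi)).Finite :=
  support_aux hK _ (M + N) M

lemma trm2_support {K i N M aK bK ai bi : ℤ} (hK : 0 < K) :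
    (Function.support (trm2 K i N M aK bK ai bi)).Finite := by
  have := support_aux hK (fun j => (aK + bK) * j ^ 2 + (bK + ai + bi) * j + bi) (M + N) (M - i)
  apply this.subset
  intro j hj
  simp only [Function.mem_support, trm2] at hj ⊢
  convert hj using 3
  ring

lemma trm_support {K i N M aK bK ai bi : ℤ} (hK : 0 < K) :
    (Function.support fun j => trm1 K i N M aK bK ai bi j - trm2 K i N M aK bK ai bi j).Finite := by
  apply ((trm1_support hK).union (trm2_support hK)).subset
  intro j hj
  simp only [Function.mem_support] at hj
  by_contra hc
  simp only [Set.mem_union, Function.mem_support, not_or, not_not] at hc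
  rw [hc.1, hc.2, sub_zero] at hj
  exact hj rfl


lemma trm_recI (K i N M aK bK ai bi j : ℤ) (h : 0 ≤ M + N - 1) :
    trm1 K i N M aK bK ai bi j - trm2 K i N M aK bK ai bi j
      = (trm1 K i N (M-1) aK bK ai bi j - trm2 K i N (M-1) aK bK ai bi j)
        + T M * (trm1 K i (N-1) M (aK+K) (bK-K) (ai+i) (bi-i) j
            - trm2 K i (N-1) M (aK+K) (bK-K) (ai+i) (bi-i) j) := by
  have pA1 : qbin (M+N) (M - K*j)
      = qbin (M+N-1) (M - K*j - 1) + T (M - K*j) * qbin (M+N-1) (M - K*j) := by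
    have := qbin_pascalA (M+N-1) (M - K*j) h
    rw [show M+N-1+1 = M+N from by ring] at this
    exact this
  have pA2 : qbin (M+N) (M - K*j - i)
      = qbin (M+N-1) (M - K*j - i - 1) + T (M - K*j - i) * qbin (M+N-1) (M - K*j - i) := by
    have := qbin_pascalA (M+N-1) (M - K*j - i) h
    rw [show M+N-1+1 = M+N from by ring] at this
    exact this
  simp only [trm1, trm2]
  rw [show M - 1 + N = M + N - 1 from by ring, show M + (N - 1) = M + N - 1 from by ring,
    show M - 1 - K * j = M - K*j - 1 from by ring,
    show M - K * j - 1 - i = M - K*j - i - 1 from by ring, pA1, pA2]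
  have h1 : (T (j * ((aK + bK) * j + bK - (ai + bi))) * T (M - K * j) : LaurentPolynomial ℤ)
      = T M * T (j * ((aK + K + (bK - K)) * j + (bK - K) - (ai + i + (bi - i)))) := by
    rw [← T_add (R := ℤ), ← T_add (R := ℤ)]; congr 1; ring
  have h2 : (T ((aK + bK) * j ^ 2 + (bK + ai + bi) * j + bi) * T (M - K * j - i) : LaurentPolynomial ℤ)
      = T M * T ((aK + K + (bK - K)) * j ^ 2 + (bK - K + (ai + i) + (bi - i)) * j + (bi - i)) := by
    rw [← T_add (R := ℤ), ← T_add (R := ℤ)]; congr 1; ring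
  linear_combination qbin (M+N-1) (M - K*j) * h1 - qbin (M+N-1) (M - K*j - i) * h2

lemma trm_recII (K i N M aK bK ai bi j : ℤ) (h : 0 ≤ M + N - 1) :
    trm1 K i N M aK bK ai bi j - trm2 K i N M aK bK ai bi j
      = T N * (trm1 K i N (M-1) (aK-K) (bK+K) (ai-i) (bi+i) j
            - trm2 K i N (M-1) (aK-K) (bK+K) (ai-i) (bi+i) j)
        + (trm1 K i (N-1) M aK bK ai bi j - trm2 K i (N-1) M aK bK ai bi j) := by
  have pB1 : qbin (M+N) (M - K*j)
      = T (M + N - (M - K*j)) * qbin (M+N-1) (M - K*j - 1) + qbin (M+N-1) (M - K*j) := by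
    have := qbin_pascalB (M+N-1) (M - K*j) h
    rw [show M+N-1+1 = M+N from by ring] at this
    exact this
  have pB2 : qbin (M+N) (M - K*j - i)
      = T (M + N - (M - K*j - i)) * qbin (M+N-1) (M - K*j - i - 1)
        + qbin (M+N-1) (M - K*j - i) := by
    have := qbin_pascalB (M+N-1) (M - K*j - i) h
    rw [show M+N-1+1 = M+N from by ring] at this
    exact this
  simp only [trm1, trm2]
  rw [show M - 1 + N = M + N - 1 from by ring, show M + (N - 1) = M + N - 1 from by ring,
    show M - 1 - K * j = M - K*j - 1 from by ring,
    show M - K * j - 1 - i = M - K*j - i - 1 from by ring, pB1, pB2]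
  have h1 : (T (j * ((aK + bK) * j + bK - (ai + bi))) * T (M + N - (M - K * j)) : LaurentPolynomial ℤ)
      = T N * T (j * ((aK - K + (bK + K)) * j + (bK + K) - (ai - i + (bi + i)))) := by
    rw [← T_add (R := ℤ), ← T_add (R := ℤ)]; congr 1; ring
  have h2 : (T ((aK + bK) * j ^ 2 + (bK + ai + bi) * j + bi) * T (M + N - (M - K * j - i)) : LaurentPolynomial ℤ)
      = T N * T ((aK - K + (bK + K)) * j ^ 2 + (bK + K + (ai - i) + (bi + i)) * j + (bi + i)) := by
    rw [← T_add (R := ℤ), ← T_add (R := ℤ)]; congr 1; ring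
  linear_combination qbin (M+N-1) (M - K*j - 1) * h1 - qbin (M+N-1) (M - K*j - i - 1) * h2

lemma D_recI {K i N M aK bK ai bi : ℤ} (hK : 0 < K) (h : 0 ≤ M + N - 1) :
    D K i N M aK bK ai bi
      = D K i N (M-1) aK bK ai bi
        + T M * D K i (N-1) M (aK+K) (bK-K) (ai+i) (bi-i) := by
  rw [D_eq, D_eq, D_eq, mul_finsum _ _]
  have hg : (Function.support fun j => T M * (trm1 K i (N-1) M (aK+K) (bK-K) (ai+i) (bi-i) j
      - trm2 K i (N-1) M (aK+K) (bK-K) (ai+i) (bi-i) j)).Finite := by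
    apply (trm_support hK).subset
    intro j hj
    simp only [Function.mem_support] at hj ⊢
    intro h0; rw [h0, mul_zero] at hj; exact hj rfl
  rw [← finsum_add_distrib (trm_support hK) hg]
  exact finsum_congr fun j => trm_recI K i N M aK bK ai bi j h

lemma D_recII {K i N M aK bK ai bi : ℤ} (hK : 0 < K) (h : 0 ≤ M + N - 1) :
    D K i N M aK bK ai bi
      = T N * D K i N (M-1) (aK-K) (bK+K) (ai-i) (bi+i)
        + D K i (N-1) M aK bK ai bi := by
  rw [D_eq, D_eq, D_eq, mul_finsum _ _]
  have hg : (Function.support fun j => T N * (trm1 K i N (M-1) (aK-K) (bK+K) (ai-i) (bi+i) j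
      - trm2 K i N (M-1) (aK-K) (bK+K) (ai-i) (bi+i) j)).Finite := by
    apply (trm_support hK).subset
    intro j hj
    simp only [Function.mem_support] at hj ⊢
    intro h0; rw [h0, mul_zero] at hj; exact hj rfl
  rw [← finsum_add_distrib hg (trm_support hK)]
  exact finsum_congr fun j => trm_recII K i N M aK bK ai bi j h

lemma D_vanish1 {K i N M aK ai : ℤ} (hK : 0 < K) (hMN : 0 ≤ M + N) (hM : M = N + i) :
    D K i N M aK 0 ai 0 = 0 := by
  rw [D_eq, finsum_sub_distrib (trm1_support hK) (trm2_support hK), sub_eq_zero,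
    ← finsum_comp_equiv (Equiv.neg ℤ) (f := trm2 K i N M aK 0 ai 0)]
  apply finsum_congr
  intro j
  simp only [trm1, trm2, Equiv.neg_apply]
  rw [qbin_symm hMN (M - K*j), show M + N - (M - K*j) = M - K * (-j) - i from by rw [hM]; ring]
  rw [show (aK + 0) * (-j) ^ 2 + ((0:ℤ) + ai + 0) * (-j) + 0
    = j * ((aK + 0) * j + 0 - (ai + 0)) from by ring]

lemma D_vanish2 {K i N M bK bi : ℤ} (hK : 0 < K) (hMN : 0 ≤ M + N) (hN : N = M + K - i) :
    D K i N M 0 bK 0 bi = 0 := by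
  rw [D_eq, finsum_sub_distrib (trm1_support hK) (trm2_support hK), sub_eq_zero,
    ← finsum_comp_equiv (Equiv.subLeft (-1 : ℤ)) (f := trm2 K i N M 0 bK 0 bi)]
  apply finsum_congr
  intro j
  simp only [trm1, trm2, Equiv.subLeft_apply]
  rw [qbin_symm hMN (M - K*j), show M + N - (M - K*j) = M - K * (-1 - j) - i from by rw [hN]; ring]
  rw [show ((0:ℤ) + bK) * (-1 - j) ^ 2 + (bK + 0 + bi) * (-1 - j) + bi
    = j * ((0 + bK) * j + bK - (0 + bi)) from by ring]

lemma D_base1 {K i N aK bK ai bi : ℤ} (hi : 0 < i) (hN : 0 ≤ N) (h : N < K - i) :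
    D K i N 0 aK bK ai bi = 1 := by
  have hK : 0 < K := by omega
  rw [D_eq, finsum_eq_single _ 0 ?_]
  · simp only [trm1, trm2]
    norm_num
    rw [qbin_zero (by omega), qbin_of_neg (show -i < 0 by omega)]
    ring
  · intro j hj
    simp only [trm1, trm2]
    rcases lt_trichotomy j 0 with hj' | hj' | hj'
    · have h1 : K * j ≤ K * (-1) := by
        apply mul_le_mul_of_nonneg_left (by omega) (by omega)
      rw [qbin_of_gt (show 0 + N < 0 - K*j by omega), qbin_of_gt (show 0 + N < 0 - K*j - i by omega)]
      simp
    · exact absurd hj' hj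
    · have h1 : K * 1 ≤ K * j := by
        apply mul_le_mul_of_nonneg_left (by omega) (by omega)
      rw [qbin_of_neg (show 0 - K*j < 0 by omega), qbin_of_neg (show 0 - K*j - i < 0 by omega)]
      simp

lemma D_base2 {K i M aK bK ai bi : ℤ} (hi : 0 < i) (hiK : i < K) (hM : 0 ≤ M) (h : M < i) :
    D K i 0 M aK bK ai bi = 1 := by
  have hK : 0 < K := by omega
  rw [D_eq, finsum_eq_single _ 0 ?_]
  · simp only [trm1, trm2]
    norm_num
    rw [qbin_self (by omega), qbin_of_neg (show M - i < 0 by omega)]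
    ring
  · intro j hj
    simp only [trm1, trm2]
    rcases lt_trichotomy j 0 with hj' | hj' | hj'
    · have h1 : K * j ≤ K * (-1) := by
        apply mul_le_mul_of_nonneg_left (by omega) (by omega)
      rw [qbin_of_gt (show M + 0 < M - K*j by omega), qbin_of_gt (show M + 0 < M - K*j - i by omega)]
      simp
    · exact absurd hj' hj
    · have h1 : K * 1 ≤ K * j := by
        apply mul_le_mul_of_nonneg_left (by omega) (by omega)
      rw [qbin_of_neg (show M - K*j < 0 by omega), qbin_of_neg (show M - K*j - i < 0 by omega)]
      simp


lemma main (K i : ℤ) (hi0 : 0 < i) (hiK : i < K) :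
    ∀ s : ℕ, ∀ N M a b : ℤ, 0 ≤ N → 0 ≤ M → N + M ≤ s → 0 ≤ a → 0 ≤ b →
      1 ≤ a + b → a + b ≤ K - 1 → b - i ≤ N - M → N - M ≤ K - a - i →
      IsNonneg (D K i N M (a*K) (b*K) (a*i) (b*i)) := by
  intro s
  induction s using Nat.strong_induction_on with
  | _ s ih =>
    intro N M a b hN hM hs ha hb hab1 hab2 h1 h2
    have hK : 0 < K := by omega
    by_cases hc1 : b = 0 ∧ M = N + i
    · rw [hc1.1]
      simp only [zero_mul]
      rw [D_vanish1 hK (by omega) hc1.2]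
      exact isNonneg_zero
    · by_cases hc2 : a = 0 ∧ N = M + K - i
      · rw [hc2.1]
        simp only [zero_mul]
        rw [D_vanish2 hK (by omega) hc2.2]
        exact isNonneg_zero
      · by_cases hM0 : M = 0
        · subst hM0
          rw [D_base1 hi0 hN (by omega)]
          exact isNonneg_one
        · by_cases hN0 : N = 0
          · subst hN0
            rw [D_base2 hi0 hiK hM (by omega)]
            exact isNonneg_one
          · by_cases hbr : 1 ≤ b ∧ N - M < K - a - i
            · have e := D_recI (K := K) (i := i) (N := N) (M := M)
                (aK := a*K) (bK := b*K) (ai := a*i) (bi := b*i) hK (by omega)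
              rw [show a*K + K = (a+1)*K from by ring, show b*K - K = (b-1)*K from by ring,
                show a*i + i = (a+1)*i from by ring, show b*i - i = (b-1)*i from by ring] at e
              rw [e]
              apply isNonneg_add
              · exact ih (s-1) (by omega) N (M-1) a b hN (by omega) (by omega) ha hb hab1 hab2
                  (by omega) (by omega)
              · exact isNonneg_T_mul hM (ih (s-1) (by omega) (N-1) M (a+1) (b-1) (by omega) hM
                  (by omega) (by omega) (by omega) (by omega) (by omega) (by omega) (by omega))
            · have hbr2 : 1 ≤ a ∧ b - i < N - M := by omega
              have e := D_recII (K := K) (i := i) (N := N) (M := M)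
                (aK := a*K) (bK := b*K) (ai := a*i) (bi := b*i) hK (by omega)
              rw [show a*K - K = (a-1)*K from by ring, show b*K + K = (b+1)*K from by ring,
                show a*i - i = (a-1)*i from by ring, show b*i + i = (b+1)*i from by ring] at e
              rw [e]
              apply isNonneg_add
              · exact isNonneg_T_mul hN (ih (s-1) (by omega) N (M-1) (a-1) (b+1) hN (by omega)
                  (by omega) (by omega) (by omega) (by omega) (by omega) (by omega) (by omega))
              · exact ih (s-1) (by omega) (N-1) M a b (by omega) hM (by omega) ha hb hab1 hab2
                  (by omega) (by omega)


end HookDiff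

/-- Andrews–Baxter–Bhatt–Burge–Forrester–Viennot: for `0 < i < K`,
`1 ≤ α + β ≤ K - 1` and `β - i ≤ N - M ≤ K - α - i`, the polynomial
`D_{K,i}(N,M;α,β)` has nonnegative coefficients. -/
theorem D_nonneg (K i N M α β : ℕ) (hi0 : 0 < i) (hiK : i < K)
    (hαβ1 : 1 ≤ α + β) (hαβ2 : α + β ≤ K - 1)
    (h1 : (β : ℤ) - i ≤ (N : ℤ) - M) (h2 : (N : ℤ) - M ≤ (K : ℤ) - α - i) :
    IsNonneg (D K i N M (α * K) (β * K) (α * i) (β * i)) := by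
  have h := HookDiff.main K i (by exact_mod_cast hi0) (by exact_mod_cast hiK) (N + M)
    N M α β (by positivity) (by positivity) (by push_cast; omega) (by positivity) (by positivity)
    (by exact_mod_cast hαβ1) (by push_cast; omega) h1 h2
  exact h
end
end
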